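/- Let A ⊆ Sym2 S be an i-connected set of unordered pairs of distinct points of the circle S, let a, b be points of the closure of T(A), and let g be the unordered pair {a, b}. If an unordered pair h of points of S links g, then h links some element of A. -/

import Mathlib

/- STATEMENT 0: Let A ⊆ Sym2 S be an i-connected set of unordered pairs of distinct
points of the circle S, let a, b be points of the closure of T(A), and let g be the
unordered pair {a, b}. If an unordered pair h of points of S links g, then h links
some element of A. -/

theorem Real.fact_zero_lt_one : Fact ((0 : ℝ) < 1) :=
  ⟨zero_lt_one⟩

attribute [local instance] Real.fact_zero_lt_one

noncomputable section

/-- The circle ℝ/ℤ. -/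
abbrev Circle' : Type := AddCircle (1 : ℝ)

/-- The ordered pairs `(a,b)` and `(c,d)` link. -/
def LinkPair (a b c d : Circle') : Prop :=
  (sbtw a c b ∧ sbtw b d a) ∨ (sbtw a d b ∧ sbtw b c a)

/-- Two unordered pairs of points of the circle link. -/
def Links (g h : Sym2 Circle') : Prop :=
  ∃ a b c d : Circle', g = s(a, b) ∧ h = s(c, d) ∧ LinkPair a b c d

/-- `T A`: the set of all points of the circle occurring in pairs of `A`. -/
def pts (A : Set (Sym2 Circle')) : Set Circle' := {x | ∃ s ∈ A, x ∈ s}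

/-- The linking graph of `A`: vertices are the elements of `A`, and two distinct
vertices are adjacent iff they link. -/
def linkGraph (A : Set (Sym2 Circle')) : SimpleGraph A :=
  SimpleGraph.fromRel fun g h => Links g.1 h.1

/-- `A` is i-connected if its linking graph is connected. -/
def IConnected (A : Set (Sym2 Circle')) : Prop := (linkGraph A).Connected

/-! ### Auxiliary machinery -/

/-- The lift of a point of the circle to the interval `(r, r+1]`. -/
def clift (r : ℝ) (x : Circle') : ℝ :=
  ((QuotientAddGroup.equivIocMod one_pos r x : Set.Ioc r (r + 1)) : ℝ)

lemma clift_mem (r : ℝ) (x : Circle') : clift r x ∈ Set.Ioc r (r + 1) :=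
  (QuotientAddGroup.equivIocMod one_pos r x).2

lemma clift_coe (r b : ℝ) : clift r ((b : ℝ) : Circle') = toIocMod one_pos r b := by
  simp [clift]

lemma coe_clift (r : ℝ) (x : Circle') : ((clift r x : ℝ) : Circle') = x := by
  conv_rhs => rw [← (QuotientAddGroup.equivIocMod one_pos r).symm_apply_apply x]
  rfl

lemma clift_inj {r : ℝ} {x y : Circle'} (h : clift r x = clift r y) : x = y := by
  rw [← coe_clift r x, ← coe_clift r y, h]

lemma clift_base (r : ℝ) : clift r ((r : ℝ) : Circle') = r + 1 := by
  rw [clift_coe, toIocMod_eq_iff]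
  exact ⟨⟨by linarith, le_rfl⟩, ⟨-1, by rw [zsmul_eq_mul]; push_cast; ring⟩⟩

/-- Strict cyclic order of three reals. -/
def cyc (u v w : ℝ) : Prop := (u < v ∧ v < w) ∨ (v < w ∧ w < u) ∨ (w < u ∧ u < v)

lemma sbtw_iff_clift (r : ℝ) (x y z : Circle') :
    sbtw x y z ↔ cyc (clift r x) (clift r y) (clift r z) := by
  obtain ⟨hu1, hu2⟩ := clift_mem r x
  obtain ⟨hv1, hv2⟩ := clift_mem r y
  obtain ⟨hw1, hw2⟩ := clift_mem r z
  set u := clift r x with hu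
  set v := clift r y with hv
  set w := clift r z with hw
  rw [← coe_clift r x, ← coe_clift r y, ← coe_clift r z, ← hu, ← hv, ← hw]
  rw [sbtw_iff_not_btw, QuotientAddGroup.btw_coe_iff, not_le]
  have hIoc : toIocMod one_pos w u = if w < u then u else u + 1 := by
    split_ifs with hcond
    · exact (toIocMod_eq_self one_pos).2 ⟨hcond, by linarith⟩
    · rw [toIocMod_eq_iff]
      exact ⟨⟨by linarith, by linarith⟩, ⟨-1, by rw [zsmul_eq_mul]; push_cast; ring⟩⟩
  have hIco : toIcoMod one_pos w v = if w ≤ v then v else v + 1 := by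
    split_ifs with hcond
    · exact (toIcoMod_eq_self one_pos).2 ⟨hcond, by linarith⟩
    · rw [toIcoMod_eq_iff]
      exact ⟨⟨by linarith, by linarith⟩, ⟨-1, by rw [zsmul_eq_mul]; push_cast; ring⟩⟩
  rw [hIoc, hIco]
  unfold cyc
  split_ifs with h1 h2 h2
  · constructor
    · intro hh; exact Or.inr (Or.inr ⟨h1, hh⟩)
    · rintro (⟨a1, a2⟩ | ⟨a1, a2⟩ | ⟨a1, a2⟩) <;> linarith
  · constructor
    · intro _; exact Or.inr (Or.inl ⟨by linarith, h1⟩)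
    · intro _; linarith
  · constructor
    · intro hh; linarith
    · rintro (⟨a1, a2⟩ | ⟨a1, a2⟩ | ⟨a1, a2⟩) <;> linarith
  · constructor
    · intro hh; exact Or.inl ⟨by linarith, by linarith⟩
    · rintro (⟨a1, a2⟩ | ⟨a1, a2⟩ | ⟨a1, a2⟩) <;> linarith

lemma core (M D P P' X Y : ℝ)
    (hPM : P ≤ M) (hP'M : P' ≤ M) (hXM : X ≤ M) (hYM : Y ≤ M)
    (hDM : D < M) (hP : P < D) (hP' : P' ≤ D ∨ M ≤ P')
    (hlk : (cyc P X P' ∧ cyc P' Y P) ∨ (cyc X P Y ∧ cyc Y P' X))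
    (hX : D ≤ X) (hY : D ≤ Y) : False := by
  unfold cyc at hlk
  rcases hP' with hP' | hP' <;>
    rcases hlk with ⟨h1, h2⟩ | ⟨h1, h2⟩ <;>
      rcases h1 with ⟨a1, a2⟩ | ⟨a1, a2⟩ | ⟨a1, a2⟩ <;>
        rcases h2 with ⟨b1, b2⟩ | ⟨b1, b2⟩ | ⟨b1, b2⟩ <;> linarith

lemma isOpen_arc (c d : Circle') : IsOpen {x : Circle' | sbtw c x d} := by
  rcases eq_or_ne c d with rfl | hcd
  · convert isOpen_empty
    ext x
    simp only [Set.mem_setOf_eq, Set.mem_empty_iff_false, iff_false]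
    exact sbtw_irrefl_left_right
  · set C := clift 0 c with hCdef
    have hCc : ((C : ℝ) : Circle') = c := coe_clift 0 c
    set D := clift C d with hDdef
    have hDm := clift_mem C d
    have hDM : D < C + 1 := by
      rcases lt_or_eq_of_le hDm.2 with hlt | heq
      · exact hlt
      · exact absurd (by rw [← hCc, ← coe_clift C d, heq, AddCircle.coe_add_period 1 C] :
          c = d) hcd
    have hset : {x : Circle' | sbtw c x d} = ((↑) : ℝ → Circle') '' Set.Ioo C D := by
      ext x
      simp only [Set.mem_setOf_eq, Set.mem_image]
      constructor
      · intro hx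
        have hcyc := (sbtw_iff_clift C c x d).1 hx
        rw [← hCc, clift_base] at hcyc
        have hxm := clift_mem C x
        refine ⟨clift C x, ⟨hxm.1, ?_⟩, coe_clift C x⟩
        rcases hcyc with ⟨h1, h2⟩ | ⟨h1, h2⟩ | ⟨h1, h2⟩
        · linarith [hxm.2]
        · exact h1
        · linarith [hxm.2]
      · rintro ⟨r, ⟨hr1, hr2⟩, rfl⟩
        have hrl : clift C ((r : ℝ) : Circle') = r := by
          rw [clift_coe]
          exact (toIocMod_eq_self one_pos).2 ⟨hr1, by linarith⟩
        rw [sbtw_iff_clift C, ← hCc, clift_base, hrl]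
        exact Or.inr (Or.inl ⟨hr2, hDM⟩)
    rw [hset]
    exact QuotientAddGroup.isOpenMap_coe _ isOpen_Ioo

lemma linkPair_swap_left {a b c d : Circle'} (h : LinkPair a b c d) : LinkPair b a c d := by
  unfold LinkPair at *; tauto

lemma linkPair_swap_right {a b c d : Circle'} (h : LinkPair a b c d) : LinkPair a b d c := by
  unfold LinkPair at *; tauto

theorem main_aux (A : Set (Sym2 Circle')) (hconn : IConnected A)
    (c d a b : Circle') (ha : a ∈ closure (pts A)) (hb : b ∈ closure (pts A))
    (hsa : sbtw c a d) (hsb : sbtw d b c) :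
    ∃ g ∈ A, Links s(c, d) g := by
  by_contra hnone
  push_neg at hnone
  have hcd : c ≠ d := by
    rintro rfl
    exact sbtw_irrefl_left_right hsa
  set C := clift 0 c with hCdef
  have hCc : ((C : ℝ) : Circle') = c := coe_clift 0 c
  set M := C + 1 with hM
  have hlc : clift C c = M := by rw [← hCc, clift_base]
  set D := clift C d with hDdef
  have hDM : D < M := by
    rcases lt_or_eq_of_le (clift_mem C d).2 with hlt | heq
    · exact hlt
    · exact absurd (clift_inj (heq.trans hlc.symm) : d = c).symm hcd
  have sbtw_cd_iff : ∀ x : Circle', sbtw c x d ↔ clift C x < D := by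
    intro x
    rw [sbtw_iff_clift C, hlc]
    constructor
    · rintro (⟨h1, h2⟩ | ⟨h1, h2⟩ | ⟨h1, h2⟩)
      · exact h2
      · exact h1
      · linarith [(clift_mem C x).2]
    · intro hx
      exact Or.inr (Or.inl ⟨hx, hDM⟩)
  have sbtw_dc : ∀ x : Circle', sbtw d x c → D < clift C x := by
    intro x hx
    have hcyc := (sbtw_iff_clift C d x c).1 hx
    rw [hlc] at hcyc
    rcases hcyc with ⟨h1, h2⟩ | ⟨h1, h2⟩ | ⟨h1, h2⟩
    · exact h1
    · linarith
    · linarith [(clift_mem C x).2]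
  obtain ⟨p, hpU, hpA⟩ := mem_closure_iff.1 ha _ (isOpen_arc c d) hsa
  obtain ⟨g₁, hg₁A, hpg₁⟩ := hpA
  obtain ⟨q, hqV, hqA⟩ := mem_closure_iff.1 hb _ (isOpen_arc d c) hsb
  obtain ⟨g₂, hg₂A, hqg₂⟩ := hqA
  let QQ : A → Prop := fun e => ∃ x ∈ (e : Sym2 Circle'), sbtw c x d
  have step : ∀ u v : A, (linkGraph A).Adj u v → QQ u → QQ v := by
    intro u v hadj hQu
    obtain ⟨x, hxu, hx⟩ := hQu
    rw [linkGraph, SimpleGraph.fromRel_adj] at hadj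
    obtain ⟨hne, hlk⟩ := hadj
    by_contra hng
    simp only [QQ, not_exists, not_and] at hng
    have hPD : clift C x < D := (sbtw_cd_iff x).1 hx
    have hnl : ∀ w : Circle', (u : Sym2 Circle') = s(x, w) →
        clift C w ≤ D ∨ M ≤ clift C w := by
      intro w huw
      by_contra hc
      push_neg at hc
      obtain ⟨hc1, hc2⟩ := hc
      have hw : sbtw d w c := by
        rw [sbtw_iff_clift C, hlc]
        exact Or.inl ⟨hc1, hc2⟩
      exact hnone u u.2 ⟨c, d, x, w, rfl, huw, Or.inl ⟨hx, hw⟩⟩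
    rcases hlk with hL | hL
    · obtain ⟨p₁, p₂, γ, δ, hu1, hv1, hlp⟩ := hL
      have hx2 : x = p₁ ∨ x = p₂ := by
        rw [hu1] at hxu; exact Sym2.mem_iff.1 hxu
      obtain ⟨w, hu1', hlp'⟩ : ∃ w, (u : Sym2 Circle') = s(x, w) ∧ LinkPair x w γ δ := by
        rcases hx2 with rfl | rfl
        · exact ⟨p₂, hu1, hlp⟩
        · exact ⟨p₁, by rw [hu1, Sym2.eq_swap], linkPair_swap_left hlp⟩
      have hP' := hnl w hu1'
      have hGv : D ≤ clift C γ := by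
        have hh := hng γ (by rw [hv1]; exact Sym2.mem_mk_left _ _)
        by_contra hcc; push_neg at hcc
        exact hh ((sbtw_cd_iff γ).2 hcc)
      have hDv : D ≤ clift C δ := by
        have hh := hng δ (by rw [hv1]; exact Sym2.mem_mk_right _ _)
        by_contra hcc; push_neg at hcc
        exact hh ((sbtw_cd_iff δ).2 hcc)
      rcases hlp' with ⟨hs1, hs2⟩ | ⟨hs1, hs2⟩
      · exact core M D (clift C x) (clift C w) (clift C γ) (clift C δ)
          (clift_mem C x).2 (clift_mem C w).2 (clift_mem C γ).2 (clift_mem C δ).2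
          hDM hPD hP'
          (Or.inl ⟨(sbtw_iff_clift C _ _ _).1 hs1, (sbtw_iff_clift C _ _ _).1 hs2⟩)
          hGv hDv
      · exact core M D (clift C x) (clift C w) (clift C δ) (clift C γ)
          (clift_mem C x).2 (clift_mem C w).2 (clift_mem C δ).2 (clift_mem C γ).2
          hDM hPD hP'
          (Or.inl ⟨(sbtw_iff_clift C _ _ _).1 hs1, (sbtw_iff_clift C _ _ _).1 hs2⟩)
          hDv hGv
    · obtain ⟨γ, δ, p₁, p₂, hv1, hu1, hlp⟩ := hL
      have hx2 : x = p₁ ∨ x = p₂ := by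
        rw [hu1] at hxu; exact Sym2.mem_iff.1 hxu
      obtain ⟨w, hu1', hlp'⟩ : ∃ w, (u : Sym2 Circle') = s(x, w) ∧ LinkPair γ δ x w := by
        rcases hx2 with rfl | rfl
        · exact ⟨p₂, hu1, hlp⟩
        · exact ⟨p₁, by rw [hu1, Sym2.eq_swap], linkPair_swap_right hlp⟩
      have hP' := hnl w hu1'
      have hGv : D ≤ clift C γ := by
        have hh := hng γ (by rw [hv1]; exact Sym2.mem_mk_left _ _)
        by_contra hcc; push_neg at hcc
        exact hh ((sbtw_cd_iff γ).2 hcc)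
      have hDv : D ≤ clift C δ := by
        have hh := hng δ (by rw [hv1]; exact Sym2.mem_mk_right _ _)
        by_contra hcc; push_neg at hcc
        exact hh ((sbtw_cd_iff δ).2 hcc)
      rcases hlp' with ⟨hs1, hs2⟩ | ⟨hs1, hs2⟩
      · exact core M D (clift C x) (clift C w) (clift C γ) (clift C δ)
          (clift_mem C x).2 (clift_mem C w).2 (clift_mem C γ).2 (clift_mem C δ).2
          hDM hPD hP'
          (Or.inr ⟨(sbtw_iff_clift C _ _ _).1 hs1, (sbtw_iff_clift C _ _ _).1 hs2⟩)
          hGv hDv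
      · exact core M D (clift C x) (clift C w) (clift C δ) (clift C γ)
          (clift_mem C x).2 (clift_mem C w).2 (clift_mem C δ).2 (clift_mem C γ).2
          hDM hPD hP'
          (Or.inr ⟨(sbtw_iff_clift C _ _ _).1 hs2, (sbtw_iff_clift C _ _ _).1 hs1⟩)
          hDv hGv
  have reach : ∀ u v : A, (linkGraph A).Reachable u v → QQ u → QQ v := by
    intro u v hr
    obtain ⟨wk⟩ := hr
    induction wk with
    | nil => exact id
    | cons hadj p ih => exact fun hq => ih (step _ _ hadj hq)
  have hQ2 : QQ ⟨g₂, hg₂A⟩ :=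
    reach ⟨g₁, hg₁A⟩ ⟨g₂, hg₂A⟩ (hconn.preconnected _ _) ⟨p, hpg₁, hpU⟩
  obtain ⟨x, hxg₂, hx⟩ := hQ2
  have hxq : x ≠ q := by
    intro hh
    have h1 := (sbtw_cd_iff x).1 hx
    have h2 := sbtw_dc q hqV
    rw [hh] at h1
    linarith
  have hg₂eq : g₂ = s(x, q) := (Sym2.mem_and_mem_iff hxq).1 ⟨hxg₂, hqg₂⟩
  exact hnone g₂ hg₂A ⟨c, d, x, q, rfl, hg₂eq, Or.inl ⟨hx, hqV⟩⟩

theorem links_pair_in_closed_hull_implies_links_element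
    (A : Set (Sym2 Circle')) (hA : ∀ s ∈ A, ¬ s.IsDiag) (hconn : IConnected A)
    (a b : Circle') (ha : a ∈ closure (pts A)) (hb : b ∈ closure (pts A))
    (h : Sym2 Circle') (hlink : Links h s(a, b)) :
    ∃ g ∈ A, Links h g := by
  obtain ⟨c, d, x, y, hh, hab, hlp⟩ := hlink
  subst hh
  have hxy := Sym2.eq_iff.1 hab.symm
  rcases hlp with ⟨h1, h2⟩ | ⟨h1, h2⟩ <;> rcases hxy with ⟨h3, h4⟩ | ⟨h3, h4⟩
  · rw [h3] at h1; rw [h4] at h2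
    exact main_aux A hconn c d a b ha hb h1 h2
  · rw [h3] at h1; rw [h4] at h2
    exact main_aux A hconn c d b a hb ha h1 h2
  · rw [h4] at h1; rw [h3] at h2
    exact main_aux A hconn c d b a hb ha h1 h2
  · rw [h4] at h1; rw [h3] at h2
    exact main_aux A hconn c d a b ha hb h1 h2
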